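/- Every 2-dimensional integral convex polytope (lattice polygon) P ⊂ ℝ^N is normal: for every positive integer n and every lattice point α ∈ nP ∩ ℤ^N, there exist α_1, …, α_n ∈ P ∩ ℤ^N with α = α_1 + ⋯ + α_n. -/

import Mathlib

open Finset Pointwise

noncomputable section

/-- Cast an integer lattice point to a real point. -/
def castPt {d : ℕ} (a : Fin d → ℤ) : Fin d → ℝ := fun i => (a i : ℝ)

/-- The cone of nonnegative real combinations of a set of vectors. -/
def coneOf {d : ℕ} (A : Set (Fin d → ℝ)) : Set (Fin d → ℝ) :=
  {x | ∃ (n : ℕ) (c : Fin n → ℝ) (v : Fin n → (Fin d → ℝ)),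
    (∀ i, 0 ≤ c i) ∧ (∀ i, v i ∈ A) ∧ x = ∑ i, c i • v i}

/-- `A_P = {(α,1) : α ∈ P ∩ ℤ^d} ⊂ ℤ^(d+1)`. -/
def APts {d : ℕ} (P : Set (Fin d → ℝ)) : Set (Fin (d+1) → ℤ) :=
  {b | b (Fin.last d) = 1 ∧ castPt (fun i : Fin d => b i.castSucc) ∈ P}

lemma castPt_inj {d : ℕ} {a b : Fin d → ℤ} (h : castPt a = castPt b) : a = b := by
  funext i; have := congrFun h i; simpa [castPt] using this

-- distribute J ≤ n*g into n parts each ≤ g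
lemma splitg : ∀ (n g J : ℕ), J ≤ n * g → ∃ j : Fin n → ℕ, (∀ i, j i ≤ g) ∧ ∑ i, j i = J := by
  intro n
  induction n with
  | zero => intro g J h; simp at h; exact ⟨fun i => 0, by simp, by simp [h]⟩
  | succ n ih =>
    intro g J h
    have h2 : J - min g J ≤ n * g := by
      rcases le_or_gt J g with hle | hlt
      · simp [min_eq_right hle]
      · have : min g J = g := min_eq_left hlt.le
        have hng : (n+1)*g = n*g + g := by ring
        omega
    obtain ⟨j, hj, hsum⟩ := ih g (J - min g J) h2
    refine ⟨Fin.cons (min g J) j, ?_, ?_⟩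
    · intro i
      refine Fin.cases ?_ ?_ i
      · simp [min_le_left]
      · intro k; simpa using hj k
    · rw [Fin.sum_cons, hsum]
      omega

lemma split2 : ∀ (n B C : ℕ), B + C ≤ n →
    ∃ jB jC : Fin n → ℕ, (∀ i, jB i + jC i ≤ 1) ∧ ∑ i, jB i = B ∧ ∑ i, jC i = C := by
  intro n
  induction n with
  | zero => intro B C h; exact ⟨0, 0, by simp, by simp; omega, by simp; omega⟩
  | succ n ih =>
    intro B C h
    rcases Nat.eq_zero_or_pos B with hB | hB
    · rcases Nat.eq_zero_or_pos C with hC | hC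
      · obtain ⟨jB, jC, h1, h2, h3⟩ := ih 0 0 (by omega)
        exact ⟨Fin.cons 0 jB, Fin.cons 0 jC, fun i => Fin.cases (by simp) (fun k => by simpa using h1 k) i,
          by rw [Fin.sum_cons, h2]; omega, by rw [Fin.sum_cons, h3]; omega⟩
      · obtain ⟨jB, jC, h1, h2, h3⟩ := ih B (C-1) (by omega)
        exact ⟨Fin.cons 0 jB, Fin.cons 1 jC, fun i => Fin.cases (by simp) (fun k => by simpa using h1 k) i,
          by rw [Fin.sum_cons, h2]; omega, by rw [Fin.sum_cons, h3]; omega⟩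
    · obtain ⟨jB, jC, h1, h2, h3⟩ := ih (B-1) C (by omega)
      exact ⟨Fin.cons 1 jB, Fin.cons 0 jC, fun i => Fin.cases (by simp) (fun k => by simpa using h1 k) i,
        by rw [Fin.sum_cons, h2]; omega, by rw [Fin.sum_cons, h3]; omega⟩

lemma bezout_finset {ι : Type*} [DecidableEq ι] (s : Finset ι) (f : ι → ℤ) :
    ∃ c : ι → ℤ, ∑ i ∈ s, c i * f i = s.gcd f := by
  induction s using Finset.induction with
  | empty => exact ⟨0, by simp⟩
  | insert a s hna ih =>
    obtain ⟨c, hc⟩ := ih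
    rw [Finset.gcd_insert]
    have hbez : (Int.gcd (f a) (s.gcd f) : ℤ) = f a * Int.gcdA (f a) (s.gcd f) + (s.gcd f) * Int.gcdB (f a) (s.gcd f) := Int.gcd_eq_gcd_ab _ _
    refine ⟨fun i => if i = a then Int.gcdA (f a) (s.gcd f) else Int.gcdB (f a) (s.gcd f) * c i, ?_⟩
    rw [Finset.sum_insert hna]
    have : ∑ i ∈ s, (if i = a then Int.gcdA (f a) (s.gcd f) else Int.gcdB (f a) (s.gcd f) * c i) * f i
        = Int.gcdB (f a) (s.gcd f) * ∑ i ∈ s, c i * f i := by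
      rw [Finset.mul_sum]
      apply Finset.sum_congr rfl
      intro i hi
      have : i ≠ a := fun h => hna (h ▸ hi)
      simp [this]; ring
    rw [this, hc]
    simp only [if_pos rfl]
    have h2 : GCDMonoid.gcd (f a) (s.gcd f) = (Int.gcd (f a) (s.gcd f) : ℤ) := (Int.coe_gcd _ _).symm
    rw [h2, hbez]
    simp; ring

lemma seg {N : ℕ} (u v z : Fin N → ℤ) (n : ℕ) (a b : ℝ) (ha : 0 ≤ a) (hb : 0 ≤ b)
    (hab : a + b = n) (hz : castPt z = a • castPt u + b • castPt v) :
    ∃ f : Fin n → (Fin N → ℤ), (∀ i, ∃ α β : ℝ, 0 ≤ α ∧ 0 ≤ β ∧ α + β = 1 ∧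
      castPt (f i) = α • castPt u + β • castPt v) ∧ z = ∑ i, f i := by
  have hzi : ∀ i, (z i : ℝ) = a * (u i : ℝ) + b * (v i : ℝ) := by
    intro i; have := congrFun hz i; simpa [castPt] using this
  by_cases huv : v = u
  · subst huv
    refine ⟨fun _ => v, fun i => ⟨1, 0, by norm_num⟩, ?_⟩
    apply castPt_inj
    have h1 : castPt (∑ _i : Fin n, v) = fun i => (n : ℝ) * (v i : ℝ) := by
      funext i; simp [castPt, Finset.sum_apply]
    rw [h1]; funext i; simp only [castPt]; rw [hzi i]
    linear_combination (v i : ℝ) * hab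
  · -- nondegenerate segment
    set d : Fin N → ℤ := v - u with hd
    have hdne : d ≠ 0 := fun h => huv (by funext i; have := congrFun h i; simp [hd] at this; omega)
    set G : ℤ := |Finset.univ.gcd d| with hG
    have hGdvd : ∀ i, G ∣ d i := fun i => (abs_dvd _ _).mpr (Finset.gcd_dvd (Finset.mem_univ i))
    have hGne : G ≠ 0 := by
      simp only [hG, ne_eq, abs_eq_zero, Finset.gcd_eq_zero_iff]
      intro h
      exact hdne (funext fun i => h i (Finset.mem_univ i))
    have hGpos : 0 < G := lt_of_le_of_ne (abs_nonneg _) (Ne.symm hGne)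
    set d' : Fin N → ℤ := fun i => d i / G with hd'
    have hdd : ∀ i, d i = G * d' i := fun i => (Int.mul_ediv_cancel' (hGdvd i)).symm
    have hdR : ∀ k, (v k : ℝ) - (u k : ℝ) = (G : ℝ) * (d' k : ℝ) := by
      intro k
      have h0 : v k - u k = G * d' k := by have := hdd k; simpa [hd] using this
      calc (v k:ℝ) - (u k:ℝ) = ((v k - u k : ℤ):ℝ) := by push_cast; ring
      _ = ((G * d' k : ℤ):ℝ) := by rw [h0]
      _ = (G:ℝ)*(d' k:ℝ) := by push_cast; ring
    have hunit : IsUnit (Finset.univ.gcd d') := by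
      have h2 : G * Finset.univ.gcd d' ∣ Finset.univ.gcd d := by
        apply Finset.dvd_gcd
        intro i _
        rw [hdd i]
        exact mul_dvd_mul_left G (Finset.gcd_dvd (Finset.mem_univ i))
      have h1 : G * Finset.univ.gcd d' ∣ G * 1 := by
        rw [mul_one, hG]
        exact (dvd_abs _ _).mpr h2
      exact isUnit_of_dvd_one ((mul_dvd_mul_iff_left hGne).mp h1)
    obtain ⟨c, hc⟩ := bezout_finset Finset.univ d'
    obtain ⟨c', hc'⟩ : ∃ c' : Fin N → ℤ, ∑ i, c' i * d' i = 1 := by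
      rcases Int.isUnit_iff.mp hunit with h1 | h1
      · exact ⟨c, by rw [hc, h1]⟩
      · refine ⟨fun i => -c i, ?_⟩
        have h3 : ∑ i, -c i * d' i = -∑ i, c i * d' i := by
          rw [← Finset.sum_neg_distrib]; apply Finset.sum_congr rfl; intros; ring
        rw [h3, hc, h1]; ring
    have hab' : a = (n : ℝ) - b := by linarith
    have hwt : ∀ i, ((z i - n * u i : ℤ) : ℝ) = (b * (G:ℝ)) * (d' i : ℝ) := by
      intro i
      push_cast
      rw [hzi i, hab']
      linear_combination b * hdR i
    set J : ℤ := ∑ i, c' i * (z i - n * u i) with hJ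
    have hJt : (J : ℝ) = b * (G:ℝ) := by
      rw [hJ]
      push_cast
      calc ∑ i, (c' i : ℝ) * ((z i : ℝ) - (n:ℝ) * (u i:ℝ))
          = ∑ i, (c' i : ℝ) * ((b * (G:ℝ)) * (d' i : ℝ)) := by
            apply Finset.sum_congr rfl; intro i _
            have h4 := hwt i; push_cast at h4; rw [h4]
        _ = (b * (G:ℝ)) * ∑ i, ((c' i : ℝ) * (d' i : ℝ)) := by
            rw [Finset.mul_sum]; apply Finset.sum_congr rfl; intros; ring
        _ = b * (G:ℝ) := by
            have h5 : ∑ i, ((c' i : ℝ) * (d' i : ℝ)) = ((∑ i, c' i * d' i : ℤ) : ℝ) := by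
              push_cast; ring
            rw [h5, hc']; simp
    have hJ0 : 0 ≤ J := by
      have h6 : (0:ℝ) ≤ (J:ℝ) := by
        rw [hJt]
        have : (0:ℝ) ≤ (G:ℝ) := by exact_mod_cast hGpos.le
        positivity
      exact_mod_cast h6
    have hbn : b ≤ (n:ℝ) := by linarith
    have hJn : J ≤ n * G := by
      have h7 : (J : ℝ) ≤ (n:ℝ) * (G:ℝ) := by
        rw [hJt]
        apply mul_le_mul_of_nonneg_right hbn (by exact_mod_cast hGpos.le)
      exact_mod_cast h7
    obtain ⟨j, hjle, hjsum⟩ := splitg n G.toNat J.toNat (by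
      have h1 : ((n * G.toNat : ℕ) : ℤ) = n * G := by
        push_cast
        rw [Int.toNat_of_nonneg hGpos.le]
      omega)
    have hjleZ : ∀ i, (j i : ℝ) ≤ (G : ℝ) := by
      intro i
      have h2 : (j i : ℤ) ≤ G := by have := hjle i; omega
      exact_mod_cast h2
    have hGR : (0:ℝ) < (G:ℝ) := by exact_mod_cast hGpos
    refine ⟨fun i => u + (j i : ℤ) • d', ?_, ?_⟩
    · intro i
      refine ⟨1 - (j i : ℝ) / (G : ℝ), (j i : ℝ) / (G : ℝ), ?_, by positivity, by ring, ?_⟩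
      · rw [sub_nonneg, div_le_one hGR]; exact hjleZ i
      · funext k
        simp only [castPt, Pi.add_apply, Pi.smul_apply, smul_eq_mul]
        push_cast
        have h9 : ((j i : ℝ)/(G:ℝ)) * ((v k:ℝ) - (u k:ℝ)) = (j i:ℝ) * (d' k:ℝ) := by
          rw [hdR k]; field_simp
        linear_combination -h9
    · apply castPt_inj
      funext k
      have hjs : (∑ i : Fin n, (j i : ℝ)) = (J : ℝ) := by
        have h1 : ((∑ i, j i : ℕ) : ℝ) = ((J.toNat : ℕ) : ℝ) := by rw [hjsum]
        rw [Nat.cast_sum] at h1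
        rw [h1]
        exact_mod_cast congrArg (fun x : ℤ => (x : ℝ)) (Int.toNat_of_nonneg hJ0)
      have hsumk : castPt (∑ i : Fin n, (u + (j i : ℤ) • d')) k
          = (n:ℝ)*(u k:ℝ) + (J:ℝ)*(d' k:ℝ) := by
        simp only [castPt, Finset.sum_apply, Pi.add_apply, Pi.smul_apply, smul_eq_mul]
        push_cast
        rw [Finset.sum_add_distrib, Finset.sum_const, ← Finset.sum_mul, hjs]
        simp [nsmul_eq_mul]
      rw [hsumk]
      simp only [castPt]
      rw [hzi k]
      linear_combination (u k : ℝ) * hab + b * hdR k - (d' k : ℝ) * hJt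

lemma pick3 (A av : Fin 3 → ℝ) (hA : ∀ i, 0 ≤ A i) (ha : ∀ i, 0 ≤ av i)
    (hex : ∃ i, 0 < av i) : ∃ k, 0 < av k ∧ ∀ j, A k * av j ≤ A j * av k := by
  classical
  set s : Finset (Fin 3) := Finset.univ.filter (fun i => 0 < av i) with hs
  obtain ⟨i0, hi0⟩ := hex
  have hne : s.Nonempty := ⟨i0, by simp [hs, hi0]⟩
  obtain ⟨k, hk, hmin⟩ := Finset.exists_min_image s (fun i => A i / av i) hne
  have hkpos : 0 < av k := by simpa [hs] using hk
  refine ⟨k, hkpos, fun j => ?_⟩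
  rcases lt_or_ge 0 (av j) with hj | hj
  · have := hmin j (by simp [hs, hj])
    rw [div_le_div_iff₀ hkpos hj] at this
    linarith
  · have hzero : av j = 0 := le_antisymm hj (ha j)
    rw [hzero, mul_zero]
    exact mul_nonneg (hA j) hkpos.le

/-- decomposition for integer coefficients -/
lemma tri_int {N : ℕ} (p q zz : Fin N → ℤ) (n : ℕ) (B C : ℤ)
    (hB : 0 ≤ B) (hC : 0 ≤ C) (hBC : B + C ≤ n)
    (hzz : castPt zz = (B:ℝ) • castPt p + (C:ℝ) • castPt q) :
    ∃ f : Fin n → (Fin N → ℤ), (∀ k, ∃ β γ : ℝ, 0 ≤ β ∧ 0 ≤ γ ∧ β + γ ≤ 1 ∧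
      castPt (f k) = β • castPt p + γ • castPt q) ∧ zz = ∑ k, f k := by
  obtain ⟨jB, jC, hj1, hjB, hjC⟩ := split2 n B.toNat C.toNat (by omega)
  refine ⟨fun k => (jB k : ℤ) • p + (jC k : ℤ) • q, ?_, ?_⟩
  · intro k
    refine ⟨(jB k : ℝ), (jC k : ℝ), by positivity, by positivity, ?_, ?_⟩
    · have := hj1 k
      have h2 : ((jB k + jC k : ℕ) : ℝ) ≤ (1:ℕ) := by exact_mod_cast this
      push_cast at h2; linarith
    · funext i
      simp only [castPt, Pi.add_apply, Pi.smul_apply, smul_eq_mul]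
      push_cast; ring
  · apply castPt_inj
    funext i
    have hBr : ((B.toNat : ℕ) : ℝ) = (B : ℝ) := by exact_mod_cast congrArg (fun x : ℤ => (x:ℝ)) (Int.toNat_of_nonneg hB)
    have hCr : ((C.toNat : ℕ) : ℝ) = (C : ℝ) := by exact_mod_cast congrArg (fun x : ℤ => (x:ℝ)) (Int.toNat_of_nonneg hC)
    have hzzi := congrFun hzz i
    simp only [castPt, Pi.add_apply, Pi.smul_apply, smul_eq_mul] at hzzi
    simp only [castPt, Finset.sum_apply, Pi.add_apply, Pi.smul_apply, smul_eq_mul]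
    push_cast
    rw [Finset.sum_add_distrib, ← Finset.sum_mul, ← Finset.sum_mul]
    have h1 : (∑ k : Fin n, (jB k : ℝ)) = (B : ℝ) := by
      rw [← Nat.cast_sum, hjB]; exact hBr
    have h2 : (∑ k : Fin n, (jC k : ℝ)) = (C : ℝ) := by
      rw [← Nat.cast_sum, hjC]; exact hCr
    rw [h1, h2, hzzi]

set_option maxHeartbeats 1000000 in
lemma tri {N : ℕ} (i0 j0 : Fin N) : ∀ m : ℕ, ∀ (p q zz : Fin N → ℤ) (n : ℕ) (b c : ℝ),
    0 ≤ b → 0 ≤ c → b + c ≤ n →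
    castPt zz = b • castPt p + c • castPt q →
    (p i0 * q j0 - p j0 * q i0).natAbs = m →
    p i0 * q j0 - p j0 * q i0 ≠ 0 →
    ∃ f : Fin n → (Fin N → ℤ), (∀ k, ∃ β γ : ℝ, 0 ≤ β ∧ 0 ≤ γ ∧ β + γ ≤ 1 ∧
      castPt (f k) = β • castPt p + γ • castPt q) ∧ zz = ∑ k, f k := by
  intro m
  induction m using Nat.strong_induction_on with
  | _ m IH =>
  intro p q zz n b c hb hc hbc hzz hm hD
  set D : ℤ := p i0 * q j0 - p j0 * q i0 with hDdef
  have hzi : ∀ i, (zz i : ℝ) = b * (p i : ℝ) + c * (q i : ℝ) := by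
    intro i; have := congrFun hzz i; simpa [castPt] using this
  clear_value D
  set β0 : ℝ := b - ⌊b⌋ with hβ0def
  set γ0 : ℝ := c - ⌊c⌋ with hγ0def
  have hβ00 : 0 ≤ β0 := by rw [hβ0def]; exact sub_nonneg.mpr (Int.floor_le b)
  have hγ00 : 0 ≤ γ0 := by rw [hγ0def]; exact sub_nonneg.mpr (Int.floor_le c)
  have hβ01 : β0 < 1 := by rw [hβ0def]; have := Int.lt_floor_add_one b; linarith
  have hγ01 : γ0 < 1 := by rw [hγ0def]; have := Int.lt_floor_add_one c; linarith
  by_cases hint : β0 = 0 ∧ γ0 = 0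
  · -- integer coefficients
    have hbint : b = (⌊b⌋ : ℝ) := by have := hint.1; rw [hβ0def] at this; linarith
    have hcint : c = (⌊c⌋ : ℝ) := by have := hint.2; rw [hγ0def] at this; linarith
    apply tri_int p q zz n ⌊b⌋ ⌊c⌋
    · exact_mod_cast hbint ▸ hb
    · exact_mod_cast hcint ▸ hc
    · have : (⌊b⌋:ℝ) + (⌊c⌋:ℝ) ≤ (n:ℝ) := by rw [← hbint, ← hcint]; exact hbc
      exact_mod_cast this
    · rw [← hbint, ← hcint]; exact hzz
  · -- fractional part gives a new lattice point in the triangle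
    have hBf0 : (0:ℤ) ≤ ⌊b⌋ := Int.le_floor.mpr (by simpa using hb)
    have hCf0 : (0:ℤ) ≤ ⌊c⌋ := Int.le_floor.mpr (by simpa using hc)
    set ρ : Fin N → ℤ := zz - ⌊b⌋ • p - ⌊c⌋ • q with hρdef
    have hρc : ∀ i, (ρ i : ℝ) = β0 * (p i : ℝ) + γ0 * (q i : ℝ) := by
      intro i
      simp only [hρdef, Pi.sub_apply, Pi.smul_apply, smul_eq_mul]
      push_cast
      rw [hzi i, hβ0def, hγ0def]; ring
    have hnz : 0 < β0 + γ0 := by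
      rcases lt_or_ge 0 (β0 + γ0) with h | h
      · exact h
      · exact absurd ⟨le_antisymm (by linarith) hβ00, le_antisymm (by linarith) hγ00⟩ hint
    obtain ⟨ρs, a1, a2, ha1, ha2, ha12, hl0, hl1, hl2, hρs⟩ :
        ∃ (ρs : Fin N → ℤ) (a1 a2 : ℝ), 0 ≤ a1 ∧ 0 ≤ a2 ∧ a1 + a2 ≤ 1 ∧
          1 - a1 - a2 < 1 ∧ a1 < 1 ∧ a2 < 1 ∧
          (∀ i, (ρs i : ℝ) = a1 * (p i : ℝ) + a2 * (q i : ℝ)) := by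
      rcases le_or_gt (β0 + γ0) 1 with hcase | hcase
      · exact ⟨ρ, β0, γ0, hβ00, hγ00, hcase, by linarith, hβ01, hγ01, hρc⟩
      · have hβpos : 0 < β0 := by
          rcases lt_or_ge 0 β0 with h | h
          · exact h
          · exfalso; have : β0 = 0 := le_antisymm h hβ00; rw [this] at hcase; linarith
        have hγpos : 0 < γ0 := by
          rcases lt_or_ge 0 γ0 with h | h
          · exact h
          · exfalso; have : γ0 = 0 := le_antisymm h hγ00; rw [this] at hcase; linarith
        refine ⟨p + q - ρ, 1 - β0, 1 - γ0, by linarith, by linarith, by linarith, by linarith,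
          by linarith, by linarith, ?_⟩
        intro i
        simp only [Pi.sub_apply, Pi.add_apply]
        push_cast
        rw [hρc i]; ring
    set a0 : ℝ := 1 - a1 - a2 with ha0def
    have ha0 : 0 ≤ a0 := by rw [ha0def]; linarith
    set A : Fin 3 → ℝ := ![(n:ℝ) - b - c, b, c] with hAdef
    set av : Fin 3 → ℝ := ![a0, a1, a2] with havdef
    have hA0 : A 0 = (n:ℝ) - b - c := rfl
    have hA1 : A 1 = b := rfl
    have hA2 : A 2 = c := rfl
    have hav0 : av 0 = a0 := rfl
    have hav1 : av 1 = a1 := rfl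
    have hav2 : av 2 = a2 := rfl
    have hAnn : ∀ i, 0 ≤ A i := by
      intro i
      fin_cases i <;> simp only [hAdef] <;> simp <;> linarith
    have havnn : ∀ i, 0 ≤ av i := by
      intro i
      fin_cases i <;> simp only [havdef] <;> simp <;> linarith
    have havex : ∃ i, 0 < av i := by
      by_contra hno
      push_neg at hno
      have h0 := hno 0; have h1 := hno 1; have h2 := hno 2
      rw [hav0, ha0def] at h0; rw [hav1] at h1; rw [hav2] at h2
      linarith
    obtain ⟨k, hkpos, hkmin⟩ := pick3 A av hAnn havnn havex
    set t : ℝ := A k / av k with htdef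
    set sv : Fin 3 → ℝ := fun j => A j - t * av j with hsvdef
    have hsnn : ∀ j, 0 ≤ sv j := by
      intro j
      rw [hsvdef]
      simp only
      rw [htdef, sub_nonneg, div_mul_eq_mul_div, div_le_iff₀ hkpos]
      exact hkmin j
    have hsk : sv k = 0 := by
      rw [hsvdef]; simp only
      rw [htdef, div_mul_cancel₀ _ (ne_of_gt hkpos)]; ring
    have ht0 : 0 ≤ t := by rw [htdef]; exact div_nonneg (hAnn k) hkpos.le
    have hAeq : ∀ j, A j = t * av j + sv j := by intro j; rw [hsvdef]; ring
    have htsum : t + (sv 0 + sv 1 + sv 2) = (n:ℝ) := by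
      have hAs := hAeq 0
      have hAs1 := hAeq 1
      have hAs2 := hAeq 2
      rw [hA0] at hAs; rw [hA1] at hAs1; rw [hA2] at hAs2
      rw [hav0] at hAs; rw [hav1] at hAs1; rw [hav2] at hAs2
      have : ((n:ℝ) - b - c) + b + c = t * (a0 + a1 + a2) + (sv 0 + sv 1 + sv 2) := by
        rw [hAs, hAs1, hAs2]; ring
      rw [ha0def] at this
      have h9 : a0 + a1 + a2 = 1 := by rw [ha0def]; ring
      nlinarith [this]
    clear_value β0 γ0 a0 A av t sv
    have hrep : ∀ i, (zz i : ℝ) = t * (ρs i : ℝ) + (sv 1) * (p i : ℝ) + (sv 2) * (q i : ℝ) := by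
      intro i
      have e1 : b = t * a1 + sv 1 := by have := hAeq 1; rw [hA1, hav1] at this; exact this
      have e2 : c = t * a2 + sv 2 := by have := hAeq 2; rw [hA2, hav2] at this; exact this
      rw [hzi i, hρs i, e1, e2]; ring
    have hDne : ((D:ℤ):ℝ) ≠ 0 := Int.cast_ne_zero.mpr hD
    have hDabs : (0:ℝ) < |(D:ℝ)| := abs_pos.mpr hDne
    have hk3 : k = 0 ∨ k = 1 ∨ k = 2 := by fin_cases k <;> simp
    rcases hk3 with rfl | rfl | rfl
    · -- replace vertex 0 (the origin)
      rw [hav0] at hkpos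
      have hs0 : sv 0 = 0 := hsk
      have hts : t + sv 1 + sv 2 = (n:ℝ) := by rw [hs0] at htsum; linarith
      set p' : Fin N → ℤ := p - ρs with hp'def
      set q' : Fin N → ℤ := q - ρs with hq'def
      set zz' : Fin N → ℤ := zz - (n:ℤ) • ρs with hzz'def
      have hp'c : ∀ i, (p' i : ℝ) = (p i:ℝ) - (ρs i:ℝ) := by
        intro i; rw [hp'def]; simp
      have hq'c : ∀ i, (q' i : ℝ) = (q i:ℝ) - (ρs i:ℝ) := by
        intro i; rw [hq'def]; simp
      have hzz'c : ∀ i, (zz' i : ℝ) = (zz i:ℝ) - (n:ℝ) * (ρs i:ℝ) := by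
        intro i; rw [hzz'def]; simp only [Pi.sub_apply, Pi.smul_apply, smul_eq_mul]
        push_cast; ring
      have hzz'r : castPt zz' = (sv 1) • castPt p' + (sv 2) • castPt q' := by
        funext i
        simp only [castPt, Pi.add_apply, Pi.smul_apply, smul_eq_mul]
        rw [hzz'c i, hp'c i, hq'c i, hrep i, hρs i]
        linear_combination (a1 * (p i:ℝ) + a2 * (q i:ℝ)) * hts
      set D' : ℤ := p' i0 * q' j0 - p' j0 * q' i0 with hD'def
      have hD'r : (D' : ℝ) = a0 * (D : ℝ) := by
        rw [hD'def, hDdef, ha0def]; push_cast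
        rw [hp'c i0, hp'c j0, hq'c i0, hq'c j0, hρs i0, hρs j0]; ring
      have hD'ne : D' ≠ 0 := by
        intro h0
        have h1 : a0 * (D:ℝ) = 0 := by rw [← hD'r, h0]; simp
        rcases mul_eq_zero.mp h1 with h2 | h2
        · exact absurd h2 (ne_of_gt hkpos)
        · exact hD (by exact_mod_cast h2)
      clear_value D'
      have hltm : D'.natAbs < m := by
        have h1 : |(D':ℝ)| < |(D:ℝ)| := by
          rw [hD'r, abs_mul, abs_of_pos hkpos]
          nlinarith [hl0, hDabs]
        rw [← Int.cast_abs, ← Int.cast_abs] at h1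
        have h2 : |D'| < |D| := by exact_mod_cast h1
        rw [Int.abs_eq_natAbs, Int.abs_eq_natAbs] at h2
        rw [← hm]
        exact_mod_cast h2
      obtain ⟨f'', hmem, hsum⟩ := IH D'.natAbs hltm p' q' zz' n (sv 1) (sv 2)
        (hsnn 1) (hsnn 2) (by linarith) hzz'r (by rw [← hD'def]) (by rw [← hD'def]; exact hD'ne)
      refine ⟨fun kk => f'' kk + ρs, ?_, ?_⟩
      · intro kk
        obtain ⟨β, γ, hβ, hγ, hβγ, hcast⟩ := hmem kk
        have h1βγ : (0:ℝ) ≤ 1 - β - γ := by linarith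
        refine ⟨β + (1-β-γ)*a1, γ + (1-β-γ)*a2, ?_, ?_, ?_, ?_⟩
        · have hx := mul_nonneg h1βγ ha1; linarith
        · have hx := mul_nonneg h1βγ ha2; linarith
        · have hx := mul_le_mul_of_nonneg_left ha12 h1βγ; linarith
        · funext i
          have hfi := congrFun hcast i
          simp only [castPt, Pi.add_apply, Pi.smul_apply, smul_eq_mul] at hfi ⊢
          push_cast
          rw [hfi, hp'c i, hq'c i, hρs i]; ring
      · apply castPt_inj
        funext i
        have hzi' := congrFun (congrArg castPt hsum) i
        simp only [castPt, Finset.sum_apply] at hzi'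
        push_cast at hzi'
        rw [hzz'c i] at hzi'
        simp only [castPt, Finset.sum_apply, Pi.add_apply]
        push_cast
        rw [Finset.sum_add_distrib, Finset.sum_const]
        simp only [Finset.card_univ, Fintype.card_fin, nsmul_eq_mul]
        linarith [hzi']
    · -- replace vertex p
      rw [hav1] at hkpos
      have hs1 : sv 1 = 0 := hsk
      have hts : t + sv 0 + sv 2 = (n:ℝ) := by rw [hs1] at htsum; linarith
      have hzz'r : castPt zz = t • castPt ρs + (sv 2) • castPt q := by
        funext i
        simp only [castPt, Pi.add_apply, Pi.smul_apply, smul_eq_mul]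
        rw [hrep i, hs1]; ring
      set D' : ℤ := ρs i0 * q j0 - ρs j0 * q i0 with hD'def
      have hD'r : (D' : ℝ) = a1 * (D : ℝ) := by
        rw [hD'def, hDdef]; push_cast
        rw [hρs i0, hρs j0]; ring
      have hD'ne : D' ≠ 0 := by
        intro h0
        have h1 : a1 * (D:ℝ) = 0 := by rw [← hD'r, h0]; simp
        rcases mul_eq_zero.mp h1 with h2 | h2
        · exact absurd h2 (ne_of_gt hkpos)
        · exact hD (by exact_mod_cast h2)
      clear_value D'
      have hltm : D'.natAbs < m := by
        have h1 : |(D':ℝ)| < |(D:ℝ)| := by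
          rw [hD'r, abs_mul, abs_of_pos hkpos]
          nlinarith [hl1, hDabs]
        rw [← Int.cast_abs, ← Int.cast_abs] at h1
        have h2 : |D'| < |D| := by exact_mod_cast h1
        rw [Int.abs_eq_natAbs, Int.abs_eq_natAbs] at h2
        rw [← hm]
        exact_mod_cast h2
      obtain ⟨f'', hmem, hsum⟩ := IH D'.natAbs hltm ρs q zz n t (sv 2)
        ht0 (hsnn 2) (by linarith [hsnn 0]) hzz'r (by rw [← hD'def]) (by rw [← hD'def]; exact hD'ne)
      refine ⟨f'', ?_, hsum⟩
      intro kk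
      obtain ⟨β, γ, hβ, hγ, hβγ, hcast⟩ := hmem kk
      refine ⟨β * a1, β * a2 + γ, mul_nonneg hβ ha1, by have hx := mul_nonneg hβ ha2; linarith, ?_, ?_⟩
      · have hx := mul_le_mul_of_nonneg_left ha12 hβ; linarith
      · funext i
        have hfi := congrFun hcast i
        simp only [castPt, Pi.add_apply, Pi.smul_apply, smul_eq_mul] at hfi ⊢
        rw [hfi, hρs i]; ring
    · -- replace vertex q
      rw [hav2] at hkpos
      have hs2 : sv 2 = 0 := hsk
      have hts : t + sv 0 + sv 1 = (n:ℝ) := by rw [hs2] at htsum; linarith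
      have hzz'r : castPt zz = (sv 1) • castPt p + t • castPt ρs := by
        funext i
        simp only [castPt, Pi.add_apply, Pi.smul_apply, smul_eq_mul]
        rw [hrep i, hs2]; ring
      set D' : ℤ := p i0 * ρs j0 - p j0 * ρs i0 with hD'def
      have hD'r : (D' : ℝ) = a2 * (D : ℝ) := by
        rw [hD'def, hDdef]; push_cast
        rw [hρs i0, hρs j0]; ring
      have hD'ne : D' ≠ 0 := by
        intro h0
        have h1 : a2 * (D:ℝ) = 0 := by rw [← hD'r, h0]; simp
        rcases mul_eq_zero.mp h1 with h2 | h2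
        · exact absurd h2 (ne_of_gt hkpos)
        · exact hD (by exact_mod_cast h2)
      clear_value D'
      have hltm : D'.natAbs < m := by
        have h1 : |(D':ℝ)| < |(D:ℝ)| := by
          rw [hD'r, abs_mul, abs_of_pos hkpos]
          nlinarith [hl2, hDabs]
        rw [← Int.cast_abs, ← Int.cast_abs] at h1
        have h2 : |D'| < |D| := by exact_mod_cast h1
        rw [Int.abs_eq_natAbs, Int.abs_eq_natAbs] at h2
        rw [← hm]
        exact_mod_cast h2
      obtain ⟨f'', hmem, hsum⟩ := IH D'.natAbs hltm p ρs zz n (sv 1) t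
        (hsnn 1) ht0 (by linarith [hsnn 0]) hzz'r (by rw [← hD'def]) (by rw [← hD'def]; exact hD'ne)
      refine ⟨f'', ?_, hsum⟩
      intro kk
      obtain ⟨β, γ, hβ, hγ, hβγ, hcast⟩ := hmem kk
      refine ⟨β + γ * a1, γ * a2, ?_, mul_nonneg hγ ha2, ?_, ?_⟩
      · have hx := mul_nonneg hγ ha1; linarith
      · have hx := mul_le_mul_of_nonneg_left ha12 hγ; linarith
      · funext i
        have hfi := congrFun hcast i
        simp only [castPt, Pi.add_apply, Pi.smul_apply, smul_eq_mul] at hfi ⊢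
        rw [hfi, hρs i]; ring

lemma castPt_zero {N : ℕ} : castPt (0 : Fin N → ℤ) = 0 := by
  funext i; simp [castPt]

/-- collinear case -/
lemma col {N : ℕ} (p q zz : Fin N → ℤ) (n : ℕ) (b c : ℝ)
    (hb : 0 ≤ b) (hc : 0 ≤ c) (hbc : b + c ≤ n)
    (hzz : castPt zz = b • castPt p + c • castPt q)
    (hm : ∀ i j : Fin N, p i * q j = p j * q i) :
    ∃ f : Fin n → (Fin N → ℤ), (∀ k, ∃ β γ : ℝ, 0 ≤ β ∧ 0 ≤ γ ∧ β + γ ≤ 1 ∧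
      castPt (f k) = β • castPt p + γ • castPt q) ∧ zz = ∑ k, f k := by
  have hzi : ∀ i, (zz i : ℝ) = b * (p i : ℝ) + c * (q i : ℝ) := by
    intro i; have := congrFun hzz i; simpa [castPt] using this
  by_cases hp0 : p = 0
  · -- p = 0 : segment from 0 to q
    obtain ⟨f, hmem, hsum⟩ := seg (0 : Fin N → ℤ) q zz n ((n:ℝ) - c) c
      (by linarith) hc (by ring)
      (by
        funext i
        simp only [castPt, Pi.add_apply, Pi.smul_apply, smul_eq_mul, Pi.zero_apply]
        rw [hzi i, hp0]
        simp)
    refine ⟨f, ?_, hsum⟩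
    intro k
    obtain ⟨α, β, hα, hβ, hαβ, hcast⟩ := hmem k
    refine ⟨0, β, le_refl 0, hβ, by linarith, ?_⟩
    rw [hcast, castPt_zero]
    simp
  · by_cases hq0 : q = 0
    · obtain ⟨f, hmem, hsum⟩ := seg (0 : Fin N → ℤ) p zz n ((n:ℝ) - b) b
        (by linarith) hb (by ring)
        (by
          funext i
          simp only [castPt, Pi.add_apply, Pi.smul_apply, smul_eq_mul, Pi.zero_apply]
          rw [hzi i, hq0]
          simp)
      refine ⟨f, ?_, hsum⟩
      intro k
      obtain ⟨α, β, hα, hβ, hαβ, hcast⟩ := hmem k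
      refine ⟨β, 0, hβ, le_refl 0, by linarith, ?_⟩
      rw [hcast, castPt_zero]
      simp
    · -- both nonzero, q = r • p
      obtain ⟨i1, hi1⟩ : ∃ i, p i ≠ 0 := by
        by_contra hno; push_neg at hno; exact hp0 (funext hno)
      have hpi1 : ((p i1 : ℤ):ℝ) ≠ 0 := Int.cast_ne_zero.mpr hi1
      set r : ℝ := (q i1 : ℝ) / (p i1 : ℝ) with hrdef
      have hqr : ∀ i, (q i : ℝ) = r * (p i : ℝ) := by
        intro i
        have := hm i1 i
        have h2 : ((p i1 : ℤ):ℝ) * ((q i : ℤ):ℝ) = ((p i : ℤ):ℝ) * ((q i1 : ℤ):ℝ) := by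
          exact_mod_cast congrArg (fun x : ℤ => (x:ℝ)) this
        rw [hrdef]
        field_simp
        linarith [h2]
      set s : ℝ := b + c * r with hsdef
      have hzs : ∀ i, (zz i : ℝ) = s * (p i : ℝ) := by
        intro i; rw [hzi i, hqr i, hsdef]; ring
      have hcn : c ≤ (n:ℝ) := by linarith
      have hbn : b ≤ (n:ℝ) := by linarith
      rcases le_or_gt 1 r with hr1 | hr1
      · -- r ≥ 1 : segment [0, q]
        have hrpos : (0:ℝ) < r := by linarith
        have hs0 : 0 ≤ s := by rw [hsdef]; have := mul_nonneg hc hrpos.le; linarith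
        have hsn : s ≤ (n:ℝ) * r := by
          rw [hsdef]
          nlinarith [mul_le_mul_of_nonneg_right hbc hrpos.le, mul_le_mul_of_nonneg_left hr1 hb]
        obtain ⟨f, hmem, hsum⟩ := seg (0 : Fin N → ℤ) q zz n ((n:ℝ) - s / r) (s / r)
          (by rw [sub_nonneg, div_le_iff₀ hrpos]; linarith) (div_nonneg hs0 hrpos.le) (by ring)
          (by
            funext i
            simp only [castPt, Pi.add_apply, Pi.smul_apply, smul_eq_mul, Pi.zero_apply]
            rw [hzs i, hqr i]
            field_simp
            ring)
        refine ⟨f, ?_, hsum⟩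
        intro k
        obtain ⟨α, β, hα, hβ, hαβ, hcast⟩ := hmem k
        refine ⟨0, β, le_refl 0, hβ, by linarith, ?_⟩
        rw [hcast, castPt_zero]
        simp
      · rcases le_or_gt 0 r with hr0 | hr0
        · -- 0 ≤ r < 1 : segment [0, p]
          have hs0 : 0 ≤ s := by rw [hsdef]; have := mul_nonneg hc hr0; linarith
          have hsn : s ≤ (n:ℝ) := by
            rw [hsdef]
            nlinarith [mul_le_mul_of_nonneg_left hr1.le hc]
          obtain ⟨f, hmem, hsum⟩ := seg (0 : Fin N → ℤ) p zz n ((n:ℝ) - s) s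
            (by linarith) hs0 (by ring)
            (by
              funext i
              simp only [castPt, Pi.add_apply, Pi.smul_apply, smul_eq_mul, Pi.zero_apply]
              rw [hzs i]
              simp)
          refine ⟨f, ?_, hsum⟩
          intro k
          obtain ⟨α, β, hα, hβ, hαβ, hcast⟩ := hmem k
          refine ⟨β, 0, hβ, le_refl 0, by linarith, ?_⟩
          rw [hcast, castPt_zero]
          simp
        · -- r < 0 : segment [q, p]
          have h1r : (0:ℝ) < 1 - r := by linarith
          have hsn : s ≤ (n:ℝ) := by
            rw [hsdef]
            nlinarith [mul_nonneg hc (neg_nonneg.mpr hr0.le)]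
          have hnrs : (n:ℝ) * r ≤ s := by
            rw [hsdef]
            nlinarith [mul_le_mul_of_nonneg_right hcn (neg_nonneg.mpr hr0.le)]
          set aa : ℝ := ((n:ℝ) - s) / (1 - r) with haadef
          have haa0 : 0 ≤ aa := by
            rw [haadef]; apply div_nonneg _ h1r.le; linarith
          have haan : aa ≤ (n:ℝ) := by
            rw [haadef, div_le_iff₀ h1r]
            nlinarith
          obtain ⟨f, hmem, hsum⟩ := seg q p zz n aa ((n:ℝ) - aa)
            haa0 (by linarith) (by ring)
            (by
              funext i
              simp only [castPt, Pi.add_apply, Pi.smul_apply, smul_eq_mul]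
              rw [hzs i, hqr i]
              have : aa * (1 - r) = (n:ℝ) - s := by
                rw [haadef]; field_simp
              linear_combination (p i : ℝ) * this)
          refine ⟨f, ?_, hsum⟩
          intro k
          obtain ⟨α, β, hα, hβ, hαβ, hcast⟩ := hmem k
          refine ⟨β, α, hβ, hα, by linarith, ?_⟩
          rw [hcast]
          module

/-- enumerate a nonempty finset with at most 3 elements as a 3-point set -/
lemma three_points {E : Type*} [DecidableEq E] (t : Finset E) (hne : t.Nonempty)
    (hcard : t.card ≤ 3) : ∃ x y z : E, x ∈ t ∧ y ∈ t ∧ z ∈ t ∧ (↑t : Set E) = {x, y, z} := by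
  interval_cases h : t.card
  · exfalso; rw [Finset.card_eq_zero] at h; exact hne.ne_empty h
  · obtain ⟨x, hx⟩ := Finset.card_eq_one.mp h
    refine ⟨x, x, x, ?_, ?_, ?_, ?_⟩ <;> simp [hx]
  · obtain ⟨x, y, hxy, hx⟩ := Finset.card_eq_two.mp h
    refine ⟨x, y, y, ?_, ?_, ?_, ?_⟩ <;> simp [hx, Set.insert_comm]
  · obtain ⟨x, y, z, _, _, _, hx⟩ := Finset.card_eq_three.mp h
    refine ⟨x, y, z, ?_, ?_, ?_, ?_⟩ <;> simp [hx]

lemma hull3coef {M : Type*} [AddCommGroup M] [Module ℝ M] (A B C x : M)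
    (hx : x ∈ convexHull ℝ ({A, B, C} : Set M)) :
    ∃ α β γ : ℝ, 0 ≤ α ∧ 0 ≤ β ∧ 0 ≤ γ ∧ α + β + γ = 1 ∧ x = α • A + β • B + γ • C := by
  rw [convexHull_insert (by exact ⟨B, by simp⟩), mem_convexJoin] at hx
  obtain ⟨a', ha', b', hb', hseg⟩ := hx
  rw [Set.mem_singleton_iff] at ha'
  rw [convexHull_pair] at hb'
  obtain ⟨μ1, μ2, hμ1, hμ2, hμs, hμeq⟩ := hb'
  obtain ⟨θ1, θ2, hθ1, hθ2, hθs, hθeq⟩ := hseg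
  subst ha'
  refine ⟨θ1, θ2 * μ1, θ2 * μ2, hθ1, mul_nonneg hθ2 hμ1, mul_nonneg hθ2 hμ2, by nlinarith, ?_⟩
  rw [← hθeq, ← hμeq]
  module

theorem stmt_11 (N : ℕ) (V : Finset (Fin N → ℤ)) (P : Set (Fin N → ℝ))
    (hP : P = convexHull ℝ (castPt '' (V : Set (Fin N → ℤ))))
    (hdim : Module.finrank ℝ (vectorSpan ℝ P) = 2) :
    ∀ n : ℕ, 0 < n → ∀ a : Fin N → ℤ, castPt a ∈ (n : ℝ) • P →
      ∃ f : Fin n → (Fin N → ℤ), (∀ i, castPt (f i) ∈ P) ∧ a = ∑ i, f i := by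
  classical
  intro n hn a ha
  obtain ⟨x, hxP, hxa⟩ := Set.mem_smul_set.mp ha
  have hxP' := hxP
  rw [hP, convexHull_eq_union] at hxP'
  simp only [Set.mem_iUnion, exists_prop] at hxP'
  obtain ⟨tf, hts, hai, hxt⟩ := hxP'
  have htne : tf.Nonempty := by
    rcases Finset.eq_empty_or_nonempty tf with h | h
    · exfalso; rw [h] at hxt; simp at hxt
    · exact h
  -- card bound via affine independence
  have htsubP : (↑tf : Set (Fin N → ℝ)) ⊆ P := by
    intro y hy
    rw [hP]
    exact subset_convexHull ℝ _ (hts hy)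
  have hcard : tf.card ≤ 3 := by
    obtain ⟨k, hk⟩ : ∃ k, tf.card = k + 1 := ⟨tf.card - 1, by
      have := Finset.card_pos.mpr htne; omega⟩
    have hfr : Module.finrank ℝ (vectorSpan ℝ (Set.range ((↑) : ↥tf → (Fin N → ℝ)))) = k := by
      apply hai.finrank_vectorSpan
      exact (Fintype.card_coe tf).trans hk
    have hfr2 : Set.range ((↑) : ↥tf → (Fin N → ℝ)) = (↑tf : Set (Fin N → ℝ)) :=
      Subtype.range_coe
    rw [hfr2] at hfr
    have hle : vectorSpan ℝ (↑tf : Set (Fin N → ℝ)) ≤ vectorSpan ℝ P := vectorSpan_mono ℝ htsubP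
    have := Submodule.finrank_mono hle
    rw [hfr, hdim] at this
    omega
  obtain ⟨A, B, C, hA, hB, hC, hset⟩ := three_points tf htne hcard
  rw [hset] at hxt
  obtain ⟨α, β, γ, hα, hβ, hγ, hsum1, hxeq⟩ := hull3coef A B C x hxt
  obtain ⟨u, huV, hAu⟩ := hts hA
  obtain ⟨v, hvV, hBv⟩ := hts hB
  obtain ⟨w, hwV, hCw⟩ := hts hC
  -- coordinates of everything
  have hxi : ∀ i, x i = α * (u i : ℝ) + β * (v i : ℝ) + γ * (w i : ℝ) := by
    intro i
    have := congrFun hxeq i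
    rw [← hAu, ← hBv, ← hCw] at this
    simpa [castPt] using this
  have hai' : ∀ i, (a i : ℝ) = (n:ℝ) * x i := by
    intro i
    have := congrFun hxa i
    simpa [castPt] using this.symm
  set p : Fin N → ℤ := v - u with hpdef
  set q : Fin N → ℤ := w - u with hqdef
  set zz : Fin N → ℤ := a - (n:ℤ) • u with hzzdef
  set b2 : ℝ := (n:ℝ) * β with hb2def
  set b3 : ℝ := (n:ℝ) * γ with hb3def
  have hb2 : 0 ≤ b2 := by rw [hb2def]; positivity
  have hb3 : 0 ≤ b3 := by rw [hb3def]; positivity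
  have hbc : b2 + b3 ≤ (n:ℝ) := by
    rw [hb2def, hb3def]
    nlinarith [mul_nonneg (Nat.cast_nonneg (α := ℝ) n) hα]
  have hzz : castPt zz = b2 • castPt p + b3 • castPt q := by
    funext i
    simp only [castPt, hzzdef, hpdef, hqdef, Pi.sub_apply, Pi.smul_apply, smul_eq_mul,
      Pi.add_apply]
    push_cast
    rw [hai' i, hxi i, hb2def, hb3def]
    linear_combination ((n:ℝ) * (u i : ℝ)) * hsum1
  have key : ∃ f : Fin n → (Fin N → ℤ), (∀ k, ∃ β' γ' : ℝ, 0 ≤ β' ∧ 0 ≤ γ' ∧ β' + γ' ≤ 1 ∧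
      castPt (f k) = β' • castPt p + γ' • castPt q) ∧ zz = ∑ k, f k := by
    by_cases hex : ∃ i j : Fin N, p i * q j - p j * q i ≠ 0
    · obtain ⟨i0, j0, hne⟩ := hex
      exact tri i0 j0 (p i0 * q j0 - p j0 * q i0).natAbs p q zz n b2 b3
        hb2 hb3 hbc hzz rfl hne
    · push_neg at hex
      apply col p q zz n b2 b3 hb2 hb3 hbc hzz
      intro i j
      have := hex i j
      omega
  obtain ⟨f', hmem, hsum⟩ := key
  refine ⟨fun k => f' k + u, ?_, ?_⟩
  · intro k
    obtain ⟨β', γ', hβ', hγ', hβγ', hcast⟩ := hmem k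
    have hcomb : castPt (f' k + u)
        = (1 - β' - γ') • castPt u + β' • castPt v + γ' • castPt w := by
      funext i
      have := congrFun hcast i
      simp only [castPt, Pi.add_apply, Pi.smul_apply, smul_eq_mul] at this ⊢
      rw [hpdef, hqdef] at this
      simp only [Pi.sub_apply] at this
      push_cast at this
      push_cast
      linarith [this]
    rw [hcomb]
    have hCvx : Convex ℝ P := by rw [hP]; exact convex_convexHull ℝ _
    have h3 : ∀ y ∈ ({u, v, w} : Finset (Fin N → ℤ)), castPt y ∈ P := by
      intro y hy
      rw [hP]
      apply subset_convexHull ℝ _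
      simp only [Finset.mem_insert, Finset.mem_singleton] at hy
      rcases hy with h | h | h
      · rw [h]; exact ⟨u, huV, rfl⟩
      · rw [h]; exact ⟨v, hvV, rfl⟩
      · rw [h]; exact ⟨w, hwV, rfl⟩
    have := hCvx.sum_mem (t := (Finset.univ : Finset (Fin 3)))
      (w := ![1 - β' - γ', β', γ']) (z := ![castPt u, castPt v, castPt w])
      (by intro i _; fin_cases i <;> simp <;> linarith)
      (by simp [Fin.sum_univ_three]; ring)
      (by
        intro i _
        fin_cases i
        · simpa using h3 u (by simp)
        · simpa using h3 v (by simp)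
        · simpa using h3 w (by simp))
    simpa [Fin.sum_univ_three] using this
  · apply castPt_inj
    funext i
    have hzi' := congrFun (congrArg castPt hsum) i
    simp only [castPt, Finset.sum_apply] at hzi'
    push_cast at hzi'
    rw [hzzdef] at hzi'
    simp only [Pi.sub_apply, Pi.smul_apply, smul_eq_mul] at hzi'
    push_cast at hzi'
    simp only [castPt, Finset.sum_apply, Pi.add_apply]
    push_cast
    rw [Finset.sum_add_distrib, Finset.sum_const]
    simp only [Finset.card_univ, Fintype.card_fin, nsmul_eq_mul]
    linarith [hzi']
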